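/- arXiv:2304.10425 — 2 statements merged into one kernel-verified Lean document; each statement's English description precedes it below -/
import Mathlib

section
/- Let f ∈ ℝ^n be a nonzero vector, n ≥ 1, and let λ, R, n be real numbers with n ≥ 3 an integer. Define A_{ijk} = (1/(n+2))[2R/((n−1)n) + λ] f_k δ_{ij} + (1/(n+2))(λ − R/(n−1))(f_j δ_{ik} + f_i δ_{jk}). Then ‖A‖² = Σ_{i,j,k} A_{ijk}² = [λ²/n + (2(n−1)/(n(n+2)))(R/(n−1) − λ)²] ‖f‖². -/
open Finset

theorem norm_A_squared {n : ℕ} (hn : 3 ≤ n)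
    (f : Fin n → ℝ) (hf : f ≠ 0) (lam R : ℝ)
    (A : Fin n → Fin n → Fin n → ℝ)
    (hA : ∀ i j k, A i j k =
      (1 / ((n : ℝ) + 2)) * (2 * R / (((n : ℝ) - 1) * n) + lam) * f k * (if i = j then 1 else 0)
        + (1 / ((n : ℝ) + 2)) * (lam - R / ((n : ℝ) - 1))
          * (f j * (if i = k then 1 else 0) + f i * (if j = k then 1 else 0))) :
    ∑ i, ∑ j, ∑ k, (A i j k) ^ 2
      = (lam ^ 2 / n + (2 * ((n : ℝ) - 1) / ((n : ℝ) * (n + 2)))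
          * (R / ((n : ℝ) - 1) - lam) ^ 2) * ∑ i, (f i) ^ 2 := by
  set a : ℝ := (1 / ((n : ℝ) + 2)) * (2 * R / (((n : ℝ) - 1) * n) + lam) with ha
  set b : ℝ := (1 / ((n : ℝ) + 2)) * (lam - R / ((n : ℝ) - 1)) with hb
  set S : ℝ := ∑ i, (f i) ^ 2 with hS
  have expand : ∀ i j k : Fin n, (A i j k) ^ 2 =
      (a ^ 2 * (if i = j then 1 else 0)) * (f k) ^ 2
      + ((if i = k then b ^ 2 * (f j) ^ 2 else 0)
      + ((if j = k then b ^ 2 * (f i) ^ 2 else 0)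
      + ((if i = k then (if i = j then 2 * a * b * (f j) * (f k) else 0) else 0)
      + ((if j = k then (if i = j then 2 * a * b * (f i) * (f k) else 0) else 0)
      + (if i = k then (if j = k then 2 * b ^ 2 * (f i) * (f j) else 0) else 0))))) := by
    intro i j k
    rw [hA]
    split_ifs <;> first | ring | (subst_vars; simp_all)
  have keyk : ∀ i j : Fin n, ∑ k, (A i j k) ^ 2 =
      (if i = j then a ^ 2 * S else 0)
      + b ^ 2 * (f j) ^ 2 + b ^ 2 * (f i) ^ 2
      + (if i = j then (4 * a * b + 2 * b ^ 2) * (f i) * (f j) else 0) := by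
    intro i j
    simp only [expand, Finset.sum_add_distrib, ← Finset.mul_sum,
      Finset.sum_ite_eq, Finset.mem_univ, if_true]
    rw [← hS]
    rcases eq_or_ne i j with rfl | h
    · simp only [eq_self_iff_true, if_true]; ring
    · simp only [if_neg h, if_neg (Ne.symm h)]; ring
  have keyj : ∀ i : Fin n, ∑ j, ∑ k, (A i j k) ^ 2 =
      a ^ 2 * S + b ^ 2 * S + (n : ℝ) * b ^ 2 * (f i) ^ 2
      + (4 * a * b + 2 * b ^ 2) * (f i) ^ 2 := by
    intro i
    simp only [keyk, Finset.sum_add_distrib, ← Finset.mul_sum,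
      Finset.sum_ite_eq, Finset.mem_univ, if_true, Finset.sum_const,
      Finset.card_univ, Fintype.card_fin, nsmul_eq_mul]
    rw [← hS]
    ring
  have keyi : ∑ i, ∑ j, ∑ k, (A i j k) ^ 2 =
      ((n : ℝ) * a ^ 2 + (2 * (n : ℝ) + 2) * b ^ 2 + 4 * a * b) * S := by
    simp only [keyj, Finset.sum_add_distrib, ← Finset.mul_sum, Finset.sum_const,
      Finset.card_univ, Fintype.card_fin, nsmul_eq_mul]
    rw [← hS]
    ring
  rw [keyi]
  congr 1
  have hn0 : (n : ℝ) ≠ 0 := by positivity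
  have hn1 : (n : ℝ) - 1 ≠ 0 := by
    have : (3 : ℝ) ≤ (n : ℝ) := by exact_mod_cast hn
    nlinarith
  have hn2 : (n : ℝ) + 2 ≠ 0 := by positivity
  rw [ha, hb]
  field_simp
  ring
end

section
/- With notation as in the previous context (W with Weyl symmetries, f ∈ ℝ^n, B_{ijk} = −(1/3)(f_l W_{lijk} − f_l W_{ljki})), one has ‖B‖² = Σ_{i,j,k} B_{ijk}² = (1/3) Σ_{p,q,i,j,k} f_p W_{pijk} W_{qijk} f_q. -/
open Finset

theorem norm_B_squared {n : ℕ}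
    (W : Fin n → Fin n → Fin n → Fin n → ℝ)
    (hanti : ∀ p i j k, W p i j k = -W p i k j)
    (hbianchi : ∀ p i j k, W p i j k + W p j k i + W p k i j = 0)
    (hpair : ∀ p i j k, W p i j k = W j k p i)
    (f : Fin n → ℝ)
    (B : Fin n → Fin n → Fin n → ℝ)
    (hB : ∀ i j k, B i j k = -(1 / 3) * ((∑ l, f l * W l i j k) - ∑ l, f l * W l j k i)) :
    ∑ i, ∑ j, ∑ k, (B i j k) ^ 2
      = (1 / 3) * ∑ p, ∑ q, ∑ i, ∑ j, ∑ k, f p * W p i j k * W q i j k * f q := by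
  classical
  set A : Fin n → Fin n → Fin n → ℝ := fun i j k => ∑ l, f l * W l i j k with hA
  -- collapse triple sums into a sum over the product type
  have h3 : ∀ g : Fin n → Fin n → Fin n → ℝ,
      (∑ i, ∑ j, ∑ k, g i j k)
        = ∑ x : Fin n × Fin n × Fin n, g x.1 x.2.1 x.2.2 := by
    intro g
    simp [Fintype.sum_prod_type]
  -- cyclic relabeling of triples
  have cyc : ∀ g : Fin n → Fin n → Fin n → ℝ,
      (∑ x : Fin n × Fin n × Fin n, g x.2.1 x.2.2 x.1)
        = ∑ x : Fin n × Fin n × Fin n, g x.1 x.2.1 x.2.2 := by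
    intro g
    exact Fintype.sum_equiv
      ⟨fun x => (x.2.1, x.2.2, x.1), fun x => (x.2.2, x.1, x.2.1),
        fun x => rfl, fun x => rfl⟩ _ _ (fun x => rfl)
  -- Bianchi identity for A
  have hAb : ∀ i j k, A i j k + A j k i + A k i j = 0 := by
    intro i j k
    have h : (∑ l, (f l * W l i j k + f l * W l j k i + f l * W l k i j)) = 0 :=
      Finset.sum_eq_zero fun l _ => by
        rw [← mul_add, ← mul_add, hbianchi, mul_zero]
    rw [Finset.sum_add_distrib, Finset.sum_add_distrib] at h
    simpa [hA] using h
  -- names for the three quadratic sums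
  have hS' : (∑ x : Fin n × Fin n × Fin n, (A x.2.1 x.2.2 x.1) ^ 2)
      = ∑ x : Fin n × Fin n × Fin n, (A x.1 x.2.1 x.2.2) ^ 2 :=
    cyc (fun i j k => (A i j k) ^ 2)
  have hU : (∑ x : Fin n × Fin n × Fin n, A x.1 x.2.1 x.2.2 * A x.2.2 x.1 x.2.1)
      = ∑ x : Fin n × Fin n × Fin n, A x.1 x.2.1 x.2.2 * A x.2.1 x.2.2 x.1 := by
    have h := cyc (fun i j k => A i j k * A k i j)
    -- h : ∑ x, A x.2.1 x.2.2 x.1 * A x.1 x.2.1 x.2.2 = ∑ x, A x.1 x.2.1 x.2.2 * A x.2.2 x.1 x.2.1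
    rw [← h]
    exact Finset.sum_congr rfl fun x _ => mul_comm _ _
  have hkey : 2 * (∑ x : Fin n × Fin n × Fin n, A x.1 x.2.1 x.2.2 * A x.2.1 x.2.2 x.1)
      + (∑ x : Fin n × Fin n × Fin n, (A x.1 x.2.1 x.2.2) ^ 2) = 0 := by
    have h0 : (∑ x : Fin n × Fin n × Fin n,
        (A x.1 x.2.1 x.2.2 * A x.2.1 x.2.2 x.1
          + A x.1 x.2.1 x.2.2 * A x.2.2 x.1 x.2.1
          + (A x.1 x.2.1 x.2.2) ^ 2)) = 0 :=
      Finset.sum_eq_zero fun x _ => by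
        linear_combination (A x.1 x.2.1 x.2.2) * hAb x.1 x.2.1 x.2.2
    rw [Finset.sum_add_distrib, Finset.sum_add_distrib, hU] at h0
    linarith
  -- express the LHS
  have hLHS : (∑ i, ∑ j, ∑ k, (B i j k) ^ 2)
      = (1/9) * ((∑ x : Fin n × Fin n × Fin n, (A x.1 x.2.1 x.2.2) ^ 2)
          - 2 * (∑ x : Fin n × Fin n × Fin n, A x.1 x.2.1 x.2.2 * A x.2.1 x.2.2 x.1)
          + (∑ x : Fin n × Fin n × Fin n, (A x.2.1 x.2.2 x.1) ^ 2)) := by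
    rw [h3 (fun i j k => (B i j k) ^ 2)]
    have hpt : ∀ x : Fin n × Fin n × Fin n, (B x.1 x.2.1 x.2.2) ^ 2
        = (1/9) * ((A x.1 x.2.1 x.2.2) ^ 2
            - 2 * (A x.1 x.2.1 x.2.2 * A x.2.1 x.2.2 x.1)
            + (A x.2.1 x.2.2 x.1) ^ 2) := fun x => by
      rw [hB]; simp only [hA]; ring
    rw [Finset.sum_congr rfl fun x _ => hpt x, ← Finset.mul_sum,
      Finset.sum_add_distrib, Finset.sum_sub_distrib, ← Finset.mul_sum]
  -- express the RHS
  have hRHS : (∑ p, ∑ q, ∑ i, ∑ j, ∑ k, f p * W p i j k * W q i j k * f q)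
      = ∑ x : Fin n × Fin n × Fin n, (A x.1 x.2.1 x.2.2) ^ 2 := by
    calc (∑ p, ∑ q, ∑ i, ∑ j, ∑ k, f p * W p i j k * W q i j k * f q)
        = ∑ p, ∑ q, ∑ x : Fin n × Fin n × Fin n,
            f p * W p x.1 x.2.1 x.2.2 * W q x.1 x.2.1 x.2.2 * f q :=
          Finset.sum_congr rfl fun p _ => Finset.sum_congr rfl fun q _ =>
            h3 (fun i j k => f p * W p i j k * W q i j k * f q)
      _ = ∑ p, ∑ x : Fin n × Fin n × Fin n, ∑ q,
            f p * W p x.1 x.2.1 x.2.2 * W q x.1 x.2.1 x.2.2 * f q :=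
          Finset.sum_congr rfl fun p _ => Finset.sum_comm
      _ = ∑ x : Fin n × Fin n × Fin n, ∑ p, ∑ q,
            f p * W p x.1 x.2.1 x.2.2 * W q x.1 x.2.1 x.2.2 * f q :=
          Finset.sum_comm
      _ = ∑ x : Fin n × Fin n × Fin n,
            (∑ p, f p * W p x.1 x.2.1 x.2.2) * (∑ q, f q * W q x.1 x.2.1 x.2.2) := by
          refine Finset.sum_congr rfl fun x _ => ?_
          rw [Finset.sum_mul_sum]
          exact Finset.sum_congr rfl fun p _ => Finset.sum_congr rfl fun q _ => by ring
      _ = ∑ x : Fin n × Fin n × Fin n, (A x.1 x.2.1 x.2.2) ^ 2 :=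
          Finset.sum_congr rfl fun x _ => by simp only [hA]; ring
  rw [hLHS, hRHS]
  linarith [hkey, hS']
end
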